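/- Let G be a finite group of odd order whose commutator subgroup G' has order pq, where p < q are distinct primes. Then G' is cyclic. -/

import Mathlib

/-- Any two automorphisms of a cyclic group commute. -/
lemma mulAut_mul_comm {α : Type*} [Group α] [IsCyclic α] (σ τ : MulAut α) : σ * τ = τ * σ := by
  obtain ⟨g, hg⟩ := IsCyclic.exists_generator (α := α)
  obtain ⟨a, ha⟩ := hg (τ g)
  obtain ⟨b, hb⟩ := hg (σ g)
  have ha' : τ g = g ^ a := ha.symm
  have hb' : σ g = g ^ b := hb.symm
  ext x
  obtain ⟨k, rfl⟩ := hg x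
  simp only [MulAut.mul_apply, map_zpow, ha', hb', ← zpow_mul]
  congr 1
  ring

/-- If `G` has odd order and its commutator subgroup has order `pq` with `p < q`
distinct primes, then the commutator subgroup is cyclic. -/
theorem stmt_7 {G : Type*} [Group G] [Finite G]
    (hodd : Odd (Nat.card G)) (p q : ℕ) (hp : p.Prime) (hq : q.Prime) (hpq : p < q)
    (hcard : Nat.card (commutator G) = p * q) :
    IsCyclic (commutator G) := by
  haveI : Fact p.Prime := ⟨hp⟩
  haveI : Fact q.Prime := ⟨hq⟩
  set H : Subgroup G := commutator G with hH
  have hq_ne_p : q ≠ p := (Nat.lt_iff_le_and_ne.mp hpq).2.symm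
  -- a Sylow q-subgroup of H
  obtain ⟨Q⟩ : Nonempty (Sylow q H) := inferInstance
  have hfactq : (Nat.card H).factorization q = 1 := by
    rw [hcard, Nat.factorization_mul hp.pos.ne' hq.pos.ne',
      hp.factorization, hq.factorization]
    simp [Finsupp.single_apply, hpq.ne]
  have hQcard : Nat.card Q = q := by
    rw [Q.card_eq_multiplicity, hfactq, pow_one]
  -- Q has index p in H
  have hQindex : (Q : Subgroup H).index = p := by
    have h0 := Subgroup.card_mul_index (Q : Subgroup H)
    rw [hcard, mul_comm p q] at h0
    rw [hQcard] at h0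
    exact Nat.eq_of_mul_eq_mul_left hq.pos h0
  -- the number of Sylow q-subgroups is 1
  have hone : Nat.card (Sylow q H) = 1 := by
    have h1 : Nat.card (Sylow q H) ≡ 1 [MOD q] := card_sylow_modEq_one q H
    have h2 : Nat.card (Sylow q H) ∣ p := hQindex ▸ Sylow.card_dvd_index Q
    rcases (Nat.dvd_prime hp).mp h2 with h | h
    · exact h
    · exfalso
      rw [h] at h1
      have hp2 := hp.two_le
      have : q ∣ p - 1 := (Nat.modEq_iff_dvd' (by omega)).mp h1.symm
      have := Nat.le_of_dvd (by omega) this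
      omega
  -- hence Q is normal in H
  have hQnormal : (Q : Subgroup H).Normal := by
    rw [← Subgroup.normalizer_eq_top_iff, ← Subgroup.index_eq_one]
    exact (Sylow.card_eq_index_normalizer Q).symm.trans hone
  haveI := hQnormal
  haveI : (Q : Subgroup H).Characteristic := Sylow.characteristic_of_normal Q hQnormal
  -- Q, viewed as a subgroup of G, is normal in G
  set Q' : Subgroup G := (Q : Subgroup H).map H.subtype with hQ'
  haveI hQ'normal : Q'.Normal := inferInstance
  have hQ'card : Nat.card Q' = q := by
    rw [← hQcard]
    exact (Nat.card_congr (Subgroup.equivMapOfInjective _ _ H.subtype_injective).toEquiv).symm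
  haveI hQ'cyclic : IsCyclic Q' := isCyclic_of_prime_card hQ'card
  -- conjugation gives a hom into the abelian group of automorphisms of Q'
  letI : CommGroup (MulAut Q') :=
    { (inferInstance : Group (MulAut Q')) with mul_comm := mulAut_mul_comm }
  have hker : commutator G ≤ (MulAut.conjNormal (H := Q')).ker :=
    Abelianization.commutator_subset_ker _
  -- hence Q is central in H
  have hQcentral : (Q : Subgroup H) ≤ Subgroup.center H := by
    intro x hx
    rw [Subgroup.mem_center_iff]
    intro h
    have hh : MulAut.conjNormal (H := Q') (h : G) = 1 := hker h.2
    have hx' : (x : G) ∈ Q' := ⟨x, hx, rfl⟩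
    have := congrArg (fun σ : MulAut Q' => ((σ ⟨(x : G), hx'⟩ : Q') : G)) hh
    simp only [MulAut.conjNormal_apply, MulAut.one_apply] at this
    have : (h : G) * x * (h : G)⁻¹ = (x : G) := this
    have hmul : (h : G) * x = (x : G) * h := by
      rw [show (h:G) * x = (h : G) * x * (h:G)⁻¹ * h by group, this]
    exact Subtype.ext hmul
  -- the center of H has index 1 or p, so H/Z(H) is cyclic, so H is abelian
  have hcindex : (Subgroup.center H).index ∣ p := by
    have h1 : Nat.card (Q : Subgroup H) ∣ Nat.card (Subgroup.center H) :=
      Subgroup.card_dvd_of_le hQcentral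
    rw [hQcard] at h1
    obtain ⟨c, hc⟩ := h1
    have hmul := Subgroup.card_mul_index (Subgroup.center H)
    rw [hcard, hc] at hmul
    have hqpos : 0 < q := hq.pos
    have h' : q * (c * (Subgroup.center H).index) = q * p := by
      rw [← mul_assoc, hmul, mul_comm]
    exact Dvd.intro_left c (Nat.eq_of_mul_eq_mul_left hqpos h')
  haveI : IsCyclic (H ⧸ Subgroup.center H) := by
    rcases (Nat.dvd_prime hp).mp hcindex with h | h
    · have h1 : Nat.card (H ⧸ Subgroup.center H) = 1 := by
        rw [← Subgroup.index_eq_card]; exact h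
      have : Subsingleton (H ⧸ Subgroup.center H) :=
        (Nat.card_eq_one_iff_unique.mp h1).1
      infer_instance
    · exact isCyclic_of_prime_card (p := p) (by rw [← Subgroup.index_eq_card]; exact h)
  have hcomm : ∀ a b : H, a * b = b * a :=
    commutative_of_cyclic_center_quotient (QuotientGroup.mk' (Subgroup.center H))
      (by rw [QuotientGroup.ker_mk'])
  -- an abelian group of order pq with p ≠ q is cyclic
  obtain ⟨x, hx⟩ := exists_prime_orderOf_dvd_card' (G := H) p (by rw [hcard]; exact ⟨q, rfl⟩)
  obtain ⟨y, hy⟩ := exists_prime_orderOf_dvd_card' (G := H) q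
    (by rw [hcard]; exact ⟨p, mul_comm p q⟩)
  refine isCyclic_of_orderOf_eq_card (x * y) ?_
  rw [Commute.orderOf_mul_eq_mul_orderOf_of_coprime (hcomm x y)
    (by rw [hx, hy]; exact (Nat.coprime_primes hp hq).mpr (by omega)), hx, hy, hcard]
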